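/- (Falling Edge Lemma) Let H be a mesh in which every axis size is a prime number, and let σ_0 →^{p} σ_1 →^{dynSlice(j,x)} σ_2 be a two-step sequence of collective operations between well-formed distributed types over H, where p is an allToAll or allPermute step. Then there exist r ≤ 2, labels q_1, …, q_r each of which is an allToAll or allPermute, with at most one of them an allToAll, a well-formed type σ_1′, a dimension index j′ and an axis x′, such that σ_0 →^{dynSlice(j′,x′)} σ_1′ →^{q_1} ⋯ →^{q_r} σ_2. -/

import Mathlib

/-! ## Meshes, index tuples, distributed dimensions and types -/

structure Mesh where
  axes : Finset String
  size : String → ℕ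
  size_pos : ∀ x ∈ axes, 1 ≤ size x

def Mesh.hasAxis (H : Mesh) (x : String) (n : ℕ) : Prop :=
  x ∈ H.axes ∧ H.size x = n

abbrev IndexTuple (H : Mesh) : Type :=
  {ι : String → ℕ // ∀ x : String, (x ∈ H.axes → ι x < H.size x) ∧ (x ∉ H.axes → ι x = 0)}

structure Dim where
  tile : ℕ
  axes : List String
  global : ℕ
deriving DecidableEq

abbrev DType := List Dim

def Mesh.WFDim (H : Mesh) (d : Dim) : Prop :=
  1 ≤ d.tile ∧ d.axes.Nodup ∧ (∀ x ∈ d.axes, x ∈ H.axes) ∧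
    d.tile * (d.axes.map H.size).prod = d.global

def Mesh.WFType (H : Mesh) (τ : DType) : Prop :=
  (∀ d ∈ τ, H.WFDim d) ∧ List.Pairwise (fun d e => ∀ x ∈ d.axes, x ∉ e.axes) τ

def globaltype (τ : DType) : List ℕ := τ.map Dim.global
def localtype (τ : DType) : List ℕ := τ.map Dim.tile
def localsize (τ : DType) : ℕ := (τ.map Dim.tile).prod

def typeAxes : DType → List String
  | [] => []
  | d :: τ => d.axes ++ typeAxes τ

/-- Base offset map of a distributed dimension, `⟦c{xs}n⟧_D`. -/
def dimOffset (H : Mesh) : ℕ → List String → (String → ℕ) → ℕ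
  | _, [], _ => 0
  | c, x :: xs, ι => c * ι x + dimOffset H (c * H.size x) xs ι

abbrev BOM (H : Mesh) : Type := IndexTuple H → List ℕ

/-- Base offset map of a distributed type, `⟦τ⟧_T`. -/
def typeOffset (H : Mesh) (τ : DType) : BOM H :=
  fun ι => τ.map (fun d => dimOffset H d.tile d.axes ι.val)

/-! ## Collective operations (high-level typing rules) -/

inductive Label where
  | allGather (i : ℕ)
  | dynSlice (i : ℕ) (x : String)
  | allToAll (i j : ℕ)
  | allPermute
deriving DecidableEq

inductive OpKind where
  | gather | slice | toAll | permute
deriving DecidableEq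

def Label.kind : Label → OpKind
  | .allGather _ => .gather
  | .dynSlice _ _ => .slice
  | .allToAll _ _ => .toAll
  | .allPermute => .permute

inductive Step (H : Mesh) : Label → DType → DType → Prop where
  | allGather {τ : DType} (i : ℕ) {c : ℕ} {x : String} {xs : List String} {s n : ℕ}
      (hwf : H.WFType τ) (hx : H.hasAxis x n)
      (hi : τ[i]? = some ⟨c, x :: xs, s⟩) :
      Step H (.allGather i) τ (τ.set i ⟨c * n, xs, s⟩)
  | dynSlice {τ : DType} (i : ℕ) (x : String) {c : ℕ} {xs : List String} {s n : ℕ}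
      (hwf : H.WFType τ) (hx : H.hasAxis x n) (hfresh : x ∉ typeAxes τ)
      (hi : τ[i]? = some ⟨c * n, xs, s⟩) :
      Step H (.dynSlice i x) τ (τ.set i ⟨c, x :: xs, s⟩)
  | allToAll {τ : DType} (i j : ℕ) {ci : ℕ} {x : String} {xsi : List String} {si cj : ℕ}
      {xsj : List String} {sj n : ℕ}
      (hwf : H.WFType τ) (hij : i ≠ j) (hx : H.hasAxis x n)
      (hi : τ[i]? = some ⟨ci, x :: xsi, si⟩)
      (hj : τ[j]? = some ⟨cj, xsj, sj⟩)
      (hdvd : n ∣ cj) :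
      Step H (.allToAll i j) τ ((τ.set i ⟨ci * n, xsi, si⟩).set j ⟨cj / n, x :: xsj, sj⟩)
  | allPermute {τ₁ τ₂ : DType}
      (hwf1 : H.WFType τ₁) (hwf2 : H.WFType τ₂)
      (hl : localtype τ₁ = localtype τ₂) (hg : globaltype τ₁ = globaltype τ₂) :
      Step H .allPermute τ₁ τ₂

/-! ## Sequences of collective operations -/

inductive CSeq (H : Mesh) : DType → DType → Type where
  | nil (τ : DType) : CSeq H τ τ
  | cons {τ₁ τ₂ τ₃ : DType} (p : Label) (h : Step H p τ₁ τ₂) (s : CSeq H τ₂ τ₃) : CSeq H τ₁ τ₃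

def CSeq.labels {H : Mesh} : {τ₁ τ₂ : DType} → CSeq H τ₁ τ₂ → List Label
  | _, _, .nil _ => []
  | _, _, .cons p _ s => p :: s.labels

def CSeq.typesList {H : Mesh} : {τ₁ τ₂ : DType} → CSeq H τ₁ τ₂ → List DType
  | _, _, .nil τ => [τ]
  | τ, _, .cons _ _ s => τ :: s.typesList

/-- The height 𝔥 of a sequence: the maximum `localsize` over all types in it. -/
def CSeq.height {H : Mesh} {τ₁ τ₂ : DType} (s : CSeq H τ₁ τ₂) : ℕ :=
  (s.typesList.map localsize).foldr max 0

/-- Cost of a single step with source `σ₁` and target `σ₂`. -/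
def stepCost (p : Label) (σ₁ σ₂ : DType) : ℕ :=
  match p with
  | .allGather _ => localsize σ₂
  | .dynSlice _ _ => 0
  | .allToAll _ _ => localsize σ₁
  | .allPermute => localsize σ₁

def CSeq.cost {H : Mesh} : {τ₁ τ₂ : DType} → CSeq H τ₁ τ₂ → ℕ
  | _, _, .nil _ => 0
  | _, _, @CSeq.cons _ σ₁ σ₂ _ p _ s => stepCost p σ₁ σ₂ + s.cost

/-- Normal form: labels matched by `dynSlice* {allToAll | allPermute}* allGather*`. -/
def NormalFormK (ks : List OpKind) : Prop :=
  ∃ a b c : List OpKind, ks = a ++ b ++ c ∧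
    (∀ k ∈ a, k = OpKind.slice) ∧
    (∀ k ∈ b, k = OpKind.toAll ∨ k = OpKind.permute) ∧
    (∀ k ∈ c, k = OpKind.gather)

/-! ## Weak collectives -/

/-- Equivalence of base offset maps. -/
def bomEquiv (H : Mesh) (β₁ β₂ : BOM H) : Prop :=
  ∃ π : Equiv.Perm (IndexTuple H), β₂ = β₁ ∘ π

/-- The weak collective relation `⟦τ₁⟧_E ▶^p ⟦τ₂⟧_E`, represented on types. -/
def WeakStep (H : Mesh) (p : Label) (τ₁ τ₂ : DType) : Prop :=
  p ≠ Label.allPermute ∧ H.WFType τ₁ ∧ H.WFType τ₂ ∧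
  ∃ σ₁ σ₂ : DType, Step H p σ₁ σ₂ ∧
    bomEquiv H (typeOffset H σ₁) (typeOffset H τ₁) ∧
    bomEquiv H (typeOffset H σ₂) (typeOffset H τ₂)

inductive WkSeq (H : Mesh) : DType → DType → Type where
  | nil (τ : DType) : WkSeq H τ τ
  | cons {τ₁ τ₂ τ₃ : DType} (p : Label) (h : WeakStep H p τ₁ τ₂) (s : WkSeq H τ₂ τ₃) :
      WkSeq H τ₁ τ₃

def WkSeq.labels {H : Mesh} : {τ₁ τ₂ : DType} → WkSeq H τ₁ τ₂ → List Label
  | _, _, .nil _ => []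
  | _, _, .cons p _ s => p :: s.labels

def WkSeq.typesList {H : Mesh} : {τ₁ τ₂ : DType} → WkSeq H τ₁ τ₂ → List DType
  | _, _, .nil τ => [τ]
  | τ, _, .cons _ _ s => τ :: s.typesList

def WkSeq.height {H : Mesh} {τ₁ τ₂ : DType} (s : WkSeq H τ₁ τ₂) : ℕ :=
  (s.typesList.map localsize).foldr max 0

def WkSeq.cost {H : Mesh} : {τ₁ τ₂ : DType} → WkSeq H τ₁ τ₂ → ℕ
  | _, _, .nil _ => 0
  | _, _, @WkSeq.cons _ σ₁ σ₂ _ p _ s => stepCost p σ₁ σ₂ + s.cost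

/-! ## Low-level MPI-style collectives on device assignments -/

abbrev DevMap (H : Mesh) (D : Type) := IndexTuple H ≃ D

structure DevAssign (H : Mesh) (D : Type) where
  dmap : DevMap H D
  bom : BOM H

inductive LLabel where
  | allGather (x : String)
  | allToAll (x : String) (j : ℕ)
  | dynSlice (i : ℕ) (x : String)
  | allPermute
deriving DecidableEq

def LLabel.kind : LLabel → OpKind
  | .allGather _ => .gather
  | .allToAll _ _ => .toAll
  | .dynSlice _ _ => .slice
  | .allPermute => .permute

inductive LStep (H : Mesh) (D : Type) : LLabel → DevAssign H D → DevAssign H D → Type where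
  | gather (τ : DType) (i : ℕ) (c : ℕ) (ys : List String) (x : String) (xs : List String)
      (s n : ℕ) (φ φ' : DevMap H D)
      (hwf : H.WFType τ) (hx : H.hasAxis x n)
      (hi : τ[i]? = some ⟨c, ys ++ x :: xs, s⟩)
      (hmap : typeOffset H (τ.set i ⟨c, x :: (ys ++ xs), s⟩) ∘ ⇑φ'.symm
            = typeOffset H τ ∘ ⇑φ.symm) :
      LStep H D (.allGather x) ⟨φ, typeOffset H τ⟩
        ⟨φ', typeOffset H (τ.set i ⟨c * n, ys ++ xs, s⟩)⟩
  | toAll (τ : DType) (i j : ℕ) (ci : ℕ) (ys : List String) (x : String) (xs : List String)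
      (si cj : ℕ) (xsj : List String) (sj n : ℕ) (φ φ' : DevMap H D)
      (hwf : H.WFType τ) (hij : i ≠ j) (hx : H.hasAxis x n)
      (hi : τ[i]? = some ⟨ci, ys ++ x :: xs, si⟩)
      (hj : τ[j]? = some ⟨cj, xsj, sj⟩)
      (hdvd : n ∣ cj)
      (hmap : typeOffset H (τ.set i ⟨ci, x :: (ys ++ xs), si⟩) ∘ ⇑φ'.symm
            = typeOffset H τ ∘ ⇑φ.symm) :
      LStep H D (.allToAll x j) ⟨φ, typeOffset H τ⟩
        ⟨φ', typeOffset H ((τ.set i ⟨ci * n, ys ++ xs, si⟩).set j ⟨cj / n, x :: xsj, sj⟩)⟩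
  | slice (τ : DType) (i : ℕ) (x : String) (c : ℕ) (xs : List String) (s n : ℕ)
      (φ : DevMap H D)
      (hwf : H.WFType τ) (hx : H.hasAxis x n) (hfresh : x ∉ typeAxes τ)
      (hi : τ[i]? = some ⟨c * n, xs, s⟩) :
      LStep H D (.dynSlice i x) ⟨φ, typeOffset H τ⟩ ⟨φ, typeOffset H (τ.set i ⟨c, x :: xs, s⟩)⟩
  | permute (τ : DType) (ρ : Equiv.Perm (IndexTuple H)) (β' : BOM H)
      (φ φ' : DevMap H D) (π : Equiv.Perm D)
      (hwf : H.WFType τ)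
      (hmap : β' ∘ ⇑φ'.symm = (typeOffset H τ ∘ ⇑ρ) ∘ ⇑φ.symm ∘ ⇑π) :
      LStep H D .allPermute ⟨φ, typeOffset H τ ∘ ⇑ρ⟩ ⟨φ', β'⟩

def LStep.cost {H : Mesh} {D : Type} :
    {l : LLabel} → {a b : DevAssign H D} → LStep H D l a b → ℕ
  | _, _, _, .gather τ i c ys x xs s n .. => localsize (τ.set i ⟨c * n, ys ++ xs, s⟩)
  | _, _, _, .toAll τ .. => localsize τ
  | _, _, _, .slice .. => 0
  | _, _, _, .permute τ .. => localsize τ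

inductive LoSeq (H : Mesh) (D : Type) : DevAssign H D → DevAssign H D → Type where
  | nil (a : DevAssign H D) : LoSeq H D a a
  | cons {a b c : DevAssign H D} (l : LLabel) (st : LStep H D l a b) (s : LoSeq H D b c) :
      LoSeq H D a c

def LoSeq.labels {H : Mesh} {D : Type} : {a b : DevAssign H D} → LoSeq H D a b → List LLabel
  | _, _, .nil _ => []
  | _, _, .cons l _ s => l :: s.labels

def LoSeq.states {H : Mesh} {D : Type} : {a b : DevAssign H D} → LoSeq H D a b → List (DevAssign H D)
  | _, _, .nil a => [a]
  | a, _, .cons _ _ s => a :: s.states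

def LoSeq.cost {H : Mesh} {D : Type} : {a b : DevAssign H D} → LoSeq H D a b → ℕ
  | _, _, .nil _ => 0
  | _, _, .cons _ st s => st.cost + s.cost
section Helpers
open List

lemma mem_typeAxes {τ : DType} {z : String} :
    z ∈ typeAxes τ ↔ ∃ d ∈ τ, z ∈ d.axes := by
  induction τ with
  | nil => simp [typeAxes]
  | cons d t ih => simp [typeAxes, ih]

lemma mem_of_getElem?' {α : Type*} {l : List α} {i : ℕ} {a : α} (h : l[i]? = some a) : a ∈ l := by
  obtain ⟨hl, he⟩ := List.getElem?_eq_some_iff.mp h; exact he ▸ l.getElem_mem hl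

lemma mem_typeAxes' {τ : DType} {z : String} :
    z ∈ typeAxes τ ↔ ∃ (k : ℕ) (d : Dim), τ[k]? = some d ∧ z ∈ d.axes := by
  rw [mem_typeAxes]
  constructor
  · rintro ⟨d, hd, hz⟩
    obtain ⟨k, hk⟩ := List.mem_iff_getElem?.mp hd
    exact ⟨k, d, hk, hz⟩
  · rintro ⟨k, d, hk, hz⟩
    exact ⟨d, mem_of_getElem?' hk, hz⟩

lemma wfdim_at {H : Mesh} {τ : DType} {i : ℕ} {d : Dim}
    (hwf : H.WFType τ) (hi : τ[i]? = some d) : H.WFDim d :=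
  hwf.1 d (mem_of_getElem?' hi)

lemma wf_disj {H : Mesh} {τ : DType} (hwf : H.WFType τ) {k m : ℕ}
    (hk : k < τ.length) (hm : m < τ.length) (hkm : k ≠ m) {z : String}
    (hz : z ∈ τ[k].axes) : z ∉ τ[m].axes := by
  intro hz'
  have hpw := List.pairwise_iff_getElem.mp hwf.2
  rcases lt_or_gt_of_ne hkm with h | h
  · exact hpw k m hk hm h z hz hz'
  · exact hpw m k hm hk h z hz' hz

lemma wf_set {H : Mesh} {τ : DType} {i : ℕ} {d d' : Dim}
    (hwf : H.WFType τ) (hi : τ[i]? = some d) (hd' : H.WFDim d')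
    (hax : ∀ z ∈ d'.axes, z ∈ d.axes ∨ z ∉ typeAxes τ) :
    H.WFType (τ.set i d') := by
  obtain ⟨hilt, hie⟩ := List.getElem?_eq_some_iff.mp hi
  constructor
  · intro e he
    rcases List.mem_or_eq_of_mem_set he with h | h
    · exact hwf.1 e h
    · subst h; exact hd'
  · rw [List.pairwise_iff_getElem]
    intro a b ha hb hab
    simp only [List.length_set] at ha hb
    have hmemTA : ∀ {k : ℕ} (h : k < τ.length) {z : String}, z ∈ τ[k].axes → z ∈ typeAxes τ := by
      intro k h z hz
      exact mem_typeAxes.mpr ⟨τ[k], List.getElem_mem h, hz⟩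
    rw [List.getElem_set, List.getElem_set]
    by_cases hia : i = a
    · subst hia
      have hib : i ≠ b := by omega
      simp only [if_pos rfl, if_neg hib]
      intro z hz
      rcases hax z hz with h | h
      · rw [← hie] at h
        exact wf_disj hwf hilt hb hib h
      · exact fun hc => h (hmemTA hb hc)
    · by_cases hib : i = b
      · subst hib
        simp only [if_neg hia, if_pos rfl]
        intro z hz hc
        rcases hax z hc with h | h
        · rw [← hie] at h
          exact wf_disj hwf hilt ha (by omega) h hz
        · exact h (hmemTA ha hz)
      · simp only [if_neg hia, if_neg hib]
        exact List.pairwise_iff_getElem.mp hwf.2 a b ha hb hab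

end Helpers
section Helpers2
open List

lemma one_le_of_mul {a b : ℕ} (h : 1 ≤ a * b) : 1 ≤ a := by
  rcases Nat.eq_zero_or_pos a with h0 | h0
  · subst h0; simp at h
  · exact h0

lemma step_wf {H : Mesh} {p : Label} {τ₁ τ₂ : DType} (h : Step H p τ₁ τ₂) : H.WFType τ₂ := by
  cases h with
  | @allGather τ i c x xs s n hwf hx hi =>
    have hd := wfdim_at hwf hi
    obtain ⟨ht, hnd, hH, hpr⟩ := hd
    refine wf_set hwf hi ⟨?_, ?_, ?_, ?_⟩ ?_
    · have hn : 1 ≤ n := hx.2 ▸ H.size_pos x hx.1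
      exact Nat.one_le_iff_ne_zero.mpr (by positivity)
    · exact (List.nodup_cons.mp hnd).2
    · intro z hz; exact hH z (List.mem_cons_of_mem _ hz)
    · simp only [List.map_cons, List.prod_cons, hx.2] at hpr
      simpa [mul_assoc] using hpr
    · intro z hz; exact Or.inl (List.mem_cons_of_mem _ hz)
  | @dynSlice τ i x c xs s n hwf hx hfresh hi =>
    have hd := wfdim_at hwf hi
    obtain ⟨ht, hnd, hH, hpr⟩ := hd
    refine wf_set hwf hi ⟨?_, ?_, ?_, ?_⟩ ?_
    · exact one_le_of_mul ht
    · refine List.nodup_cons.mpr ⟨fun hc => hfresh ?_, hnd⟩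
      exact mem_typeAxes'.mpr ⟨i, _, hi, hc⟩
    · intro z hz
      rcases List.mem_cons.mp hz with h | h
      · exact h ▸ hx.1
      · exact hH z h
    · simp only [List.map_cons, List.prod_cons, hx.2, ← mul_assoc]
      exact hpr
    · intro z hz
      rcases List.mem_cons.mp hz with h | h
      · exact Or.inr (h ▸ hfresh)
      · exact Or.inl h
  | @allToAll τ i j ci x xsi si cj xsj sj n hwf hij hx hi hj hdvd =>
    have hdi := wfdim_at hwf hi
    have hdj := wfdim_at hwf hj
    obtain ⟨hti, hndi, hHi, hpri⟩ := hdi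
    obtain ⟨htj, hndj, hHj, hprj⟩ := hdj
    replace hti : 1 ≤ ci := hti
    replace htj : 1 ≤ cj := htj
    replace hndi : (x :: xsi).Nodup := hndi
    replace hndj : xsj.Nodup := hndj
    replace hpri : ci * ((x :: xsi).map H.size).prod = si := hpri
    replace hprj : cj * (xsj.map H.size).prod = sj := hprj
    have hilt : i < τ₁.length := (List.getElem?_eq_some_iff.mp hi).1
    have hjlt : j < τ₁.length := (List.getElem?_eq_some_iff.mp hj).1
    have hn : 1 ≤ n := hx.2 ▸ H.size_pos x hx.1
    have hwf' : H.WFType (τ₁.set i ⟨ci * n, xsi, si⟩) := by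
      refine wf_set hwf hi ⟨?_, ?_, ?_, ?_⟩ ?_
      · exact Nat.one_le_iff_ne_zero.mpr (by positivity)
      · exact (List.nodup_cons.mp hndi).2
      · intro z hz; exact hHi z (List.mem_cons_of_mem _ hz)
      · simp only [List.map_cons, List.prod_cons, hx.2] at hpri
        simpa [mul_assoc] using hpri
      · intro z hz; exact Or.inl (List.mem_cons_of_mem _ hz)
    have hj' : (τ₁.set i ⟨ci * n, xsi, si⟩)[j]? = some ⟨cj, xsj, sj⟩ := by
      rw [List.getElem?_set_ne hij]; exact hj
    refine wf_set hwf' hj' ⟨?_, ?_, ?_, ?_⟩ ?_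
    · rw [Nat.one_le_div_iff (by omega)]
      exact Nat.le_of_dvd (by omega) hdvd
    · refine List.nodup_cons.mpr ⟨?_, hndj⟩
      have hxmem : x ∈ τ₁[i].axes := by
        have := (List.getElem?_eq_some_iff.mp hi).2; rw [this]; simp
      have := wf_disj hwf hilt hjlt hij hxmem
      rwa [(List.getElem?_eq_some_iff.mp hj).2] at this
    · intro z hz
      rcases List.mem_cons.mp hz with h | h
      · exact h ▸ hx.1
      · exact hHj z h
    · simp only [List.map_cons, List.prod_cons, hx.2, ← mul_assoc, Nat.div_mul_cancel hdvd]
      exact hprj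
    · intro z hz
      rcases List.mem_cons.mp hz with h | h
      · subst h
        refine Or.inr fun hc => ?_
        obtain ⟨k, d, hk, hzd⟩ := mem_typeAxes'.mp hc
        by_cases hki : k = i
        · subst hki
          rw [List.getElem?_set_self hilt] at hk
          cases hk
          exact (List.nodup_cons.mp hndi).1 hzd
        · rw [List.getElem?_set_ne (fun h => hki h.symm)] at hk
          have hklt : k < τ₁.length := (List.getElem?_eq_some_iff.mp hk).1
          have hxmem : z ∈ τ₁[i].axes := by
            have := (List.getElem?_eq_some_iff.mp hi).2; rw [this]; simp
          have hzk : z ∈ τ₁[k].axes := by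
            rw [(List.getElem?_eq_some_iff.mp hk).2]; exact hzd
          exact wf_disj hwf hilt hklt (fun h => hki h.symm) hxmem hzk
      · exact Or.inl h
  | allPermute hwf1 hwf2 hl hg => exact hwf2

end Helpers2
section Helpers3
open List

lemma nodup_typeAxes {H : Mesh} {τ : DType} (hwf : H.WFType τ) : (typeAxes τ).Nodup := by
  obtain ⟨h1, h2⟩ := hwf
  induction τ with
  | nil => simp [typeAxes]
  | cons d t ih =>
    rw [List.pairwise_cons] at h2
    refine (List.nodup_append).mpr ⟨(h1 d (by simp)).2.1, ih (fun e he => h1 e (by simp [he])) h2.2, ?_⟩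
    intro z hz z' hz' hzz; subst hzz
    obtain ⟨e, he, hze⟩ := mem_typeAxes.mp hz'
    exact h2.1 e he z hz hze

lemma countP_typeAxes_eq {H : Mesh} (hP : ∀ x ∈ H.axes, (H.size x).Prime)
    {τ₀ τ₁ : DType}
    (h0 : ∀ d ∈ τ₀, H.WFDim d) (h1 : ∀ d ∈ τ₁, H.WFDim d)
    (hl : localtype τ₀ = localtype τ₁) (hg : globaltype τ₀ = globaltype τ₁)
    (n : ℕ) :
    (typeAxes τ₀).countP (fun z => H.size z == n)
      = (typeAxes τ₁).countP (fun z => H.size z == n) := by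
  induction τ₀ generalizing τ₁ with
  | nil => cases τ₁ <;> simp_all [localtype]
  | cons d t ih =>
    cases τ₁ with
    | nil => simp [localtype] at hl
    | cons e t₁ =>
      simp only [localtype, globaltype, List.map_cons, List.cons.injEq] at hl hg
      have hd := h0 d (by simp)
      have he := h1 e (by simp)
      have hprod : (d.axes.map H.size).prod = (e.axes.map H.size).prod := by
        have p1 := hd.2.2.2
        have p2 := he.2.2.2
        rw [hl.1, hg.1] at p1
        exact Nat.eq_of_mul_eq_mul_left (lt_of_lt_of_le Nat.zero_lt_one (hl.1 ▸ hd.1))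
          (p1.trans p2.symm)
      have hperm : (d.axes.map H.size).Perm (e.axes.map H.size) := by
        have q1 : ∀ q ∈ d.axes.map H.size, q.Prime := by
          intro q hq; obtain ⟨z, hz, rfl⟩ := List.mem_map.mp hq
          exact hP z (hd.2.2.1 z hz)
        have q2 : ∀ q ∈ e.axes.map H.size, q.Prime := by
          intro q hq; obtain ⟨z, hz, rfl⟩ := List.mem_map.mp hq
          exact hP z (he.2.2.1 z hz)
        exact (Nat.primeFactorsList_unique rfl q1).trans
          (Nat.primeFactorsList_unique hprod.symm q2).symm
      have hcount : d.axes.countP (fun z => H.size z == n)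
          = e.axes.countP (fun z => H.size z == n) := by
        have := hperm.countP_eq (fun q => q == n)
        rwa [List.countP_map, List.countP_map] at this
      simp only [typeAxes, List.countP_append, hcount]
      rw [ih (fun a ha => h0 a (by simp [ha])) (fun a ha => h1 a (by simp [ha])) hl.2 hg.2]

lemma mem_H_of_typeAxes {H : Mesh} {τ : DType} (hwf : H.WFType τ) {z : String}
    (hz : z ∈ typeAxes τ) : z ∈ H.axes := by
  obtain ⟨d, hd, hzd⟩ := mem_typeAxes.mp hz
  exact (hwf.1 d hd).2.2.1 z hzd

lemma exists_fresh {H : Mesh} (hP : ∀ x ∈ H.axes, (H.size x).Prime)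
    {τ₀ τ₁ : DType} (hw0 : H.WFType τ₀) (hw1 : H.WFType τ₁)
    (hl : localtype τ₀ = localtype τ₁) (hg : globaltype τ₀ = globaltype τ₁)
    {x : String} {n : ℕ} (hx : H.hasAxis x n) (hx0 : x ∈ typeAxes τ₀)
    (hx1 : x ∉ typeAxes τ₁) :
    ∃ x', H.hasAxis x' n ∧ x' ∉ typeAxes τ₀ := by
  classical
  set P : String → Bool := fun z => H.size z == n with hP'
  set l₀ := (typeAxes τ₀).filter P with hl₀
  set l₁ := (typeAxes τ₁).filter P with hl₁
  have hlen : l₀.length = l₁.length := by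
    rw [hl₀, hl₁, ← List.countP_eq_length_filter, ← List.countP_eq_length_filter]
    exact countP_typeAxes_eq hP hw0.1 hw1.1 hl hg n
  have hnd₀ : l₀.Nodup := (nodup_typeAxes hw0).filter P
  have hnd₁ : l₁.Nodup := (nodup_typeAxes hw1).filter P
  have hxl₀ : x ∈ l₀ := List.mem_filter.mpr ⟨hx0, by simp [hP', hx.2]⟩
  have hxl₁ : x ∉ l₁ := fun hc => hx1 (List.mem_filter.mp hc).1
  have : ∃ x' ∈ l₁, x' ∉ l₀ := by
    by_contra hc
    push_neg at hc
    have hsub : l₁.toFinset ⊆ l₀.toFinset := by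
      intro z hz; exact List.mem_toFinset.mpr (hc z (List.mem_toFinset.mp hz))
    have hcard : l₀.toFinset.card ≤ l₁.toFinset.card := by
      rw [List.toFinset_card_of_nodup hnd₀, List.toFinset_card_of_nodup hnd₁, hlen]
    have heq := Finset.eq_of_subset_of_card_le hsub hcard
    exact hxl₁ (List.mem_toFinset.mp (heq ▸ List.mem_toFinset.mpr hxl₀))
  obtain ⟨x', hx'₁, hx'₀⟩ := this
  obtain ⟨hmem, hsz⟩ := List.mem_filter.mp hx'₁
  have hszn : H.size x' = n := by simpa [hP'] using hsz
  refine ⟨x', ⟨mem_H_of_typeAxes hw1 hmem, hszn⟩, fun hc => ?_⟩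
  exact hx'₀ (List.mem_filter.mpr ⟨hc, by simp [hP', hszn]⟩)

lemma tile_global_at {τ₀ τ₁ : DType} (hl : localtype τ₀ = localtype τ₁)
    (hg : globaltype τ₀ = globaltype τ₁) {j : ℕ} {d : Dim} (hj : τ₁[j]? = some d) :
    ∃ d₀ : Dim, τ₀[j]? = some d₀ ∧ d₀.tile = d.tile ∧ d₀.global = d.global := by
  have h1 : (localtype τ₀)[j]? = some d.tile := by
    rw [hl]; simp [localtype, List.getElem?_map, hj]
  have h2 : (globaltype τ₀)[j]? = some d.global := by
    rw [hg]; simp [globaltype, List.getElem?_map, hj]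
  simp only [localtype, globaltype, List.getElem?_map] at h1 h2
  obtain ⟨d₀, hd₀, ht⟩ := Option.map_eq_some_iff.mp h1
  obtain ⟨d₀', hd₀', hgl⟩ := Option.map_eq_some_iff.mp h2
  rw [hd₀] at hd₀'
  cases hd₀'
  exact ⟨d₀, hd₀, ht, hgl⟩

end Helpers3
section Helpers4
lemma set_getElem?_self' {α : Type*} {l : List α} {i : ℕ} {v : α} (h : l[i]? = some v) :
    l.set i v = l := by
  apply List.ext_getElem?
  intro k
  by_cases hk : i = k
  · subst hk; rw [List.getElem?_set_self (List.getElem?_eq_some_iff.mp h).1, h]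
  · rw [List.getElem?_set_ne hk]
end Helpers4
/-- Falling Edge Lemma. -/
theorem stmt4 (H : Mesh) (hP : ∀ x ∈ H.axes, (H.size x).Prime)
    (σ₀ σ₁ σ₂ : DType) (p : Label) (j : ℕ) (x : String)
    (hp : p.kind = OpKind.toAll ∨ p.kind = OpKind.permute)
    (h1 : Step H p σ₀ σ₁) (h2 : Step H (.dynSlice j x) σ₁ σ₂) :
    ∃ (j' : ℕ) (x' : String) (σ₁' : DType) (s : CSeq H σ₁' σ₂),
      H.WFType σ₁' ∧
      Step H (.dynSlice j' x') σ₀ σ₁' ∧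
      s.labels.length ≤ 2 ∧
      (∀ l ∈ s.labels, l.kind = OpKind.toAll ∨ l.kind = OpKind.permute) ∧
      (s.labels.filter (fun l => decide (l.kind = OpKind.toAll))).length ≤ 1 := by
  have hwf2 : H.WFType σ₂ := step_wf h2
  cases h2 with
  | dynSlice _ _ hwf1 hx hfresh hj =>
  rename_i c xs s n
  cases h1 with
  | allGather i => simp [Label.kind] at hp
  | dynSlice i y => simp [Label.kind] at hp
  | allPermute hwf0 hwf1b hl hg =>
    obtain ⟨d₀, hj₀, htile, hglob⟩ := tile_global_at hl hg hj
    obtain ⟨t0, xs₀, g0⟩ := d₀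
    simp only at htile hglob
    subst htile hglob
    have hxex : ∃ x', H.hasAxis x' n ∧ x' ∉ typeAxes σ₀ := by
      by_cases hx0 : x ∈ typeAxes σ₀
      · exact exists_fresh hP hwf0 hwf1 hl hg hx hx0 hfresh
      · exact ⟨x, hx, hx0⟩
    obtain ⟨x', hx', hfr⟩ := hxex
    have step1 : Step H (.dynSlice j x') σ₀ (σ₀.set j ⟨c, x' :: xs₀, g0⟩) :=
      Step.dynSlice j x' hwf0 hx' hfr hj₀
    have hwf1' := step_wf step1
    have hl' : localtype (σ₀.set j ⟨c, x' :: xs₀, g0⟩)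
        = localtype (σ₁.set j ⟨c, x :: xs, g0⟩) := by
      simp only [localtype, List.map_set]
      rw [show List.map Dim.tile σ₀ = List.map Dim.tile σ₁ from hl]
    have hg' : globaltype (σ₀.set j ⟨c, x' :: xs₀, g0⟩)
        = globaltype (σ₁.set j ⟨c, x :: xs, g0⟩) := by
      simp only [globaltype, List.map_set]
      rw [show List.map Dim.global σ₀ = List.map Dim.global σ₁ from hg]
    have step2 : Step H .allPermute (σ₀.set j ⟨c, x' :: xs₀, g0⟩)
        (σ₁.set j ⟨c, x :: xs, g0⟩) := Step.allPermute hwf1' hwf2 hl' hg'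
    refine ⟨j, x', _, CSeq.cons .allPermute step2 (CSeq.nil _), hwf1', step1, ?_, ?_, ?_⟩
    · simp [CSeq.labels]
    · simp [CSeq.labels, Label.kind]
    · simp [CSeq.labels, Label.kind]
  | allToAll a b hwf0 hab hy ha hb hdvd =>
    rename_i ca y ysa sa cb xsb sb m
    have halt : a < σ₀.length := (List.getElem?_eq_some_iff.mp ha).1
    have hblt : b < σ₀.length := (List.getElem?_eq_some_iff.mp hb).1
    have hm1 : 1 ≤ m := hy.2 ▸ H.size_pos y hy.1
    have hn1 : 1 ≤ n := hx.2 ▸ H.size_pos x hx.1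
    have hfresh0 : x ∉ typeAxes σ₀ := by
      intro hc
      apply hfresh
      obtain ⟨k, d, hk, hzd⟩ := mem_typeAxes'.mp hc
      by_cases hka : k = a
      · subst hka
        rw [ha] at hk; cases hk
        rcases List.mem_cons.mp hzd with h | h
        · subst h
          refine mem_typeAxes'.mpr ⟨b, _, List.getElem?_set_self (by simpa using hblt), by simp⟩
        · refine mem_typeAxes'.mpr ⟨k, ⟨ca * m, ysa, sa⟩, ?_, h⟩
          rw [List.getElem?_set_ne (Ne.symm hab), List.getElem?_set_self halt]
      · by_cases hkb : k = b
        · subst hkb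
          rw [hb] at hk; cases hk
          refine mem_typeAxes'.mpr ⟨k, ⟨cb / m, y :: xsb, sb⟩, List.getElem?_set_self (by simpa using hblt), ?_⟩
          exact List.mem_cons_of_mem _ hzd
        · refine mem_typeAxes'.mpr ⟨k, d, ?_, hzd⟩
          rw [List.getElem?_set_ne (fun h => hkb h.symm), List.getElem?_set_ne (fun h => hka h.symm)]
          exact hk
    by_cases hja : j = a
    · -- falling edge hits the source dimension of the allToAll
      subst hja
      rw [List.getElem?_set_ne (Ne.symm hab), List.getElem?_set_self halt] at hj
      obtain ⟨h1, h2, h3⟩ : ca * m = c * n ∧ ysa = xs ∧ sa = s := by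
        simpa [Dim.mk.injEq] using hj
      subst h2 h3
      have hda := wfdim_at hwf0 ha
      have hta : 1 ≤ ca := hda.1
      have hnda : (y :: ysa).Nodup := hda.2.1
      have hHa : ∀ z ∈ y :: ysa, z ∈ H.axes := hda.2.2.1
      have hpra : ca * ((y :: ysa).map H.size).prod = sa := hda.2.2.2
      have hxny : x ∉ y :: ysa := fun hc => hfresh0 (mem_typeAxes'.mpr ⟨j, _, ha, hc⟩)
      by_cases hnca : n ∣ ca
      · -- n divides ca : slice at j, permute the two head axes, then allToAll
        have hca : σ₀[j]? = some ⟨ca / n * n, y :: ysa, sa⟩ := by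
          rw [ha, Nat.div_mul_cancel hnca]
        have step1 : Step H (.dynSlice j x) σ₀ (σ₀.set j ⟨ca / n, x :: y :: ysa, sa⟩) :=
          Step.dynSlice j x hwf0 hx hfresh0 hca
        have hwfA := step_wf step1
        have hwfT : H.WFType (σ₀.set j ⟨ca / n, y :: x :: ysa, sa⟩) := by
          refine wf_set hwf0 ha ⟨?_, ?_, ?_, ?_⟩ ?_
          · rw [Nat.one_le_div_iff (by omega)]
            exact Nat.le_of_dvd (by omega) hnca
          · refine List.nodup_cons.mpr ⟨?_, List.nodup_cons.mpr
              ⟨fun hc => hxny (List.mem_cons_of_mem _ hc), (List.nodup_cons.mp hnda).2⟩⟩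
            intro hc
            rcases List.mem_cons.mp hc with h | h
            · exact hxny (h ▸ List.mem_cons_self (a := y) (l := ysa))
            · exact (List.nodup_cons.mp hnda).1 h
          · intro z hz
            rcases List.mem_cons.mp hz with h | h
            · exact h ▸ hHa y (by simp)
            · rcases List.mem_cons.mp h with h' | h'
              · exact h' ▸ hx.1
              · exact hHa z (by simp [h'])
          · simp only [List.map_cons, List.prod_cons, hx.2, hy.2] at hpra ⊢
            rw [← hpra]
            conv_rhs => rw [← Nat.div_mul_cancel hnca]
            ring
          · intro z hz
            rcases List.mem_cons.mp hz with h | h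
            · exact Or.inl (h ▸ List.mem_cons_self (a := y) (l := ysa))
            · rcases List.mem_cons.mp h with h' | h'
              · exact Or.inr (h' ▸ hfresh0)
              · exact Or.inl (List.mem_cons_of_mem _ h')
        have step2 : Step H .allPermute (σ₀.set j ⟨ca / n, x :: y :: ysa, sa⟩)
            (σ₀.set j ⟨ca / n, y :: x :: ysa, sa⟩) := by
          refine Step.allPermute hwfA hwfT ?_ ?_
          · simp [localtype, List.map_set]
          · simp [globaltype, List.map_set]
        have haT : (σ₀.set j ⟨ca / n, y :: x :: ysa, sa⟩)[j]? =
            some ⟨ca / n, y :: x :: ysa, sa⟩ := List.getElem?_set_self (by simpa using halt)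
        have hbT : (σ₀.set j ⟨ca / n, y :: x :: ysa, sa⟩)[b]? = some ⟨cb, xsb, sb⟩ := by
          rw [List.getElem?_set_ne hab]; exact hb
        have step3 := Step.allToAll j b hwfT hab hy haT hbT hdvd
        rw [List.set_set] at step3
        have hc : ca / n * m = c := by
          have h0 : ca / n * m * n = c * n := by
            rw [mul_right_comm, Nat.div_mul_cancel hnca, h1]
          exact Nat.eq_of_mul_eq_mul_right (by omega) h0
        rw [hc] at step3
        have hσ₂eq : ((σ₀.set j ⟨ca * m, ysa, sa⟩).set b ⟨cb / m, y :: xsb, sb⟩).set j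
              ⟨c, x :: ysa, sa⟩
            = (σ₀.set j ⟨c, x :: ysa, sa⟩).set b ⟨cb / m, y :: xsb, sb⟩ := by
          rw [List.set_comm (⟨cb / m, y :: xsb, sb⟩ : Dim) (⟨c, x :: ysa, sa⟩ : Dim)
            (Ne.symm hab), List.set_set]
        rw [← hσ₂eq] at step3
        refine ⟨j, x, _, CSeq.cons .allPermute step2
          (CSeq.cons (.allToAll j b) step3 (CSeq.nil _)), hwfA, step1, ?_, ?_, ?_⟩
        · simp [CSeq.labels]
        · simp [CSeq.labels, Label.kind]
        · simp [CSeq.labels, Label.kind]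
      · -- n does not divide ca : then n = m, slice at b and permute
        have hnprime : n.Prime := hx.2 ▸ hP x hx.1
        have hmprime : m.Prime := hy.2 ▸ hP y hy.1
        have hnm : n = m := by
          have hd : n ∣ ca * m := h1 ▸ dvd_mul_left n c
          rcases (Nat.Prime.dvd_mul hnprime).mp hd with h | h
          · exact absurd h hnca
          · exact (Nat.prime_dvd_prime_iff_eq hnprime hmprime).mp h
        subst hnm
        have hcac : ca = c := Nat.eq_of_mul_eq_mul_right (by omega) h1
        have hb' : σ₀[b]? = some ⟨cb / n * n, xsb, sb⟩ := by
          rw [hb, Nat.div_mul_cancel hdvd]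
        have step1 : Step H (.dynSlice b x) σ₀ (σ₀.set b ⟨cb / n, x :: xsb, sb⟩) :=
          Step.dynSlice b x hwf0 hx hfresh0 hb'
        have hwfA := step_wf step1
        have hLa : (List.map Dim.tile σ₀)[j]? = some ca := by
          simp [List.getElem?_map, ha]
        have hGa : (List.map Dim.global σ₀)[j]? = some sa := by
          simp [List.getElem?_map, ha]
        have step2 : Step H .allPermute (σ₀.set b ⟨cb / n, x :: xsb, sb⟩)
            (((σ₀.set j ⟨ca * n, ysa, sa⟩).set b ⟨cb / n, y :: xsb, sb⟩).set j
              ⟨c, x :: ysa, sa⟩) := by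
          refine Step.allPermute hwfA hwf2 ?_ ?_
          · simp only [localtype, List.map_set]
            rw [List.set_comm (cb / n) c (l := List.map Dim.tile σ₀ |>.set j (ca * n))
              (Ne.symm hab), List.set_set, ← hcac, set_getElem?_self' hLa]
          · simp only [globaltype, List.map_set]
            rw [List.set_comm sb sa (l := List.map Dim.global σ₀ |>.set j sa)
              (Ne.symm hab), List.set_set, set_getElem?_self' hGa]
        refine ⟨b, x, _, CSeq.cons .allPermute step2 (CSeq.nil _), hwfA, step1, ?_, ?_, ?_⟩
        · simp [CSeq.labels]
        · simp [CSeq.labels, Label.kind]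
        · simp [CSeq.labels, Label.kind]
    · by_cases hjb : j = b
      · -- falling edge hits the target dimension of the allToAll
        subst hjb
        rw [List.getElem?_set_self (by simpa using hblt)] at hj
        obtain ⟨h1, h2, h3⟩ : cb / m = c * n ∧ y :: xsb = xs ∧ sb = s := by
          simpa [Dim.mk.injEq] using hj
        subst h2 h3
        have hcb : σ₀[j]? = some ⟨c * m * n, xsb, sb⟩ := by
          rw [hb]
          congr 2
          rw [← Nat.div_mul_cancel hdvd, h1]; ring
        have step1 : Step H (.dynSlice j x) σ₀ (σ₀.set j ⟨c * m, x :: xsb, sb⟩) :=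
          Step.dynSlice j x hwf0 hx hfresh0 hcb
        have hwfA := step_wf step1
        have ha2 : (σ₀.set j ⟨c * m, x :: xsb, sb⟩)[a]? = some ⟨ca, y :: ysa, sa⟩ := by
          rw [List.getElem?_set_ne (Ne.symm hab)]; exact ha
        have hb2 : (σ₀.set j ⟨c * m, x :: xsb, sb⟩)[j]? = some ⟨c * m, x :: xsb, sb⟩ :=
          List.getElem?_set_self (by simpa using hblt)
        have step2 := Step.allToAll a j hwfA hab hy ha2 hb2 (dvd_mul_left m c)
        rw [List.set_comm (⟨c * m, x :: xsb, sb⟩ : Dim) (⟨ca * m, ysa, sa⟩ : Dim) (l := σ₀)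
            (Ne.symm hab), List.set_set, Nat.mul_div_cancel c (by omega)] at step2
        have hwfB := step_wf step2
        have hl3 : localtype ((σ₀.set a ⟨ca * m, ysa, sa⟩).set j ⟨c, y :: x :: xsb, sb⟩)
            = localtype (((σ₀.set a ⟨ca * m, ysa, sa⟩).set j
                ⟨cb / m, y :: xsb, sb⟩).set j ⟨c, x :: y :: xsb, sb⟩) := by
          simp [localtype, List.map_set, List.set_set]
        have hg3 : globaltype ((σ₀.set a ⟨ca * m, ysa, sa⟩).set j ⟨c, y :: x :: xsb, sb⟩)
            = globaltype (((σ₀.set a ⟨ca * m, ysa, sa⟩).set j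
                ⟨cb / m, y :: xsb, sb⟩).set j ⟨c, x :: y :: xsb, sb⟩) := by
          simp [globaltype, List.map_set, List.set_set]
        have step3 := Step.allPermute hwfB hwf2 hl3 hg3
        refine ⟨j, x, _, CSeq.cons (.allToAll a j) step2
          (CSeq.cons .allPermute step3 (CSeq.nil _)), hwfA, step1, ?_, ?_, ?_⟩
        · simp [CSeq.labels]
        · simp [CSeq.labels, Label.kind]
        · simp [CSeq.labels, Label.kind]
      · -- independent dimensions: swap directly
        have hjσ₀ : σ₀[j]? = some ⟨c * n, xs, s⟩ := by
          rw [List.getElem?_set_ne (fun h => hjb h.symm),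
            List.getElem?_set_ne (fun h => hja h.symm)] at hj
          exact hj
        have step1 : Step H (.dynSlice j x) σ₀ (σ₀.set j ⟨c, x :: xs, s⟩) :=
          Step.dynSlice j x hwf0 hx hfresh0 hjσ₀
        have hwfA := step_wf step1
        have ha' : (σ₀.set j ⟨c, x :: xs, s⟩)[a]? = some ⟨ca, y :: ysa, sa⟩ := by
          rw [List.getElem?_set_ne hja]; exact ha
        have hb' : (σ₀.set j ⟨c, x :: xs, s⟩)[b]? = some ⟨cb, xsb, sb⟩ := by
          rw [List.getElem?_set_ne hjb]; exact hb
        have step2 := Step.allToAll a b hwfA hab hy ha' hb' hdvd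
        rw [List.set_comm (⟨c, x :: xs, s⟩ : Dim) (⟨ca * m, ysa, sa⟩ : Dim) (l := σ₀) hja,
          List.set_comm (⟨c, x :: xs, s⟩ : Dim) (⟨cb / m, y :: xsb, sb⟩ : Dim) hjb] at step2
        refine ⟨j, x, _, CSeq.cons (.allToAll a b) step2 (CSeq.nil _), hwfA, step1, ?_, ?_, ?_⟩
        · simp [CSeq.labels]
        · simp [CSeq.labels, Label.kind]
        · simp [CSeq.labels, Label.kind]
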